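/- Let (a_N)_{N≥1} and (b_N)_{N≥1} be sequences of complex numbers such that a_N = Σ_{n≤N} c_n w_n and b_N = Σ_{n≤N} c_n v_n for the same complex coefficients c_n, where w_n, v_n > 0 and the ratio w_n/v_n is monotonically decreasing in n. Then there exists an absolute constant C > 0 such that for all r > 2, V_r(a_N/A_N : N) ≤ C · V_r(b_N/B_N : N), where A_N = Σ_{n≤N} w_n and B_N = Σ_{n≤N} v_n — in particular, r-variational bounds for weighted averages transfer between comparable monotone weights. -/

import Mathlib

open scoped ENNReal

open Finset MeasureTheory Set

/-- The `r`-variational seminorm of a sequence indexed by the set `A ⊆ ℕ`. -/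
noncomputable def rVar (r : ℝ) (a : ℕ → ℂ) (A : Set ℕ) : ℝ≥0∞ :=
  ⨆ (J : ℕ) (k : Fin (J + 1) → ℕ) (_ : StrictMono k) (_ : ∀ j, k j ∈ A),
    ENNReal.ofReal
      ((∑ j : Fin J, ‖ a (k j.succ) - a (k j.castSucc)‖ ^ r) ^ (1 / r))


lemma abel_sum {R : Type*} [CommRing R] (lam u : ℕ → R) (N : ℕ) :
    ∑ n ∈ Finset.Icc 1 (N+1), lam n * u n
      = ∑ n ∈ Finset.Icc 1 N, (lam n - lam (n+1)) * (∑ m ∈ Finset.Icc 1 n, u m)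
        + lam (N+1) * ∑ m ∈ Finset.Icc 1 (N+1), u m := by
  induction N with
  | zero => simp
  | succ N ih =>
      conv_rhs => rw [Finset.sum_Icc_succ_top (by omega : 1 ≤ N+1),
        Finset.sum_Icc_succ_top (by omega : 1 ≤ N+1+1)]
      rw [Finset.sum_Icc_succ_top (by omega : 1 ≤ N+1+1), ih,
          Finset.sum_Icc_succ_top (by omega : 1 ≤ N+1)]
      ring

lemma snoc_strictMono {L : ℕ} {k : Fin (L+1) → ℕ} {z : ℕ} (hk : StrictMono k)
    (hz : k (Fin.last L) < z) : StrictMono (Fin.snoc k z) := by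
  intro a b hab
  rcases Fin.eq_castSucc_or_eq_last b with ⟨b', rfl⟩ | rfl
  · rcases Fin.eq_castSucc_or_eq_last a with ⟨a', rfl⟩ | rfl
    · rw [Fin.snoc_castSucc, Fin.snoc_castSucc]
      exact hk (by exact_mod_cast hab)
    · exact absurd hab (by simp [Fin.lt_iff_val_lt_val])
  · rcases Fin.eq_castSucc_or_eq_last a with ⟨a', rfl⟩ | rfl
    · rw [Fin.snoc_castSucc, Fin.snoc_last]
      exact lt_of_le_of_lt (hk.monotone (Fin.le_last a')) hz
    · exact absurd hab (lt_irrefl _)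

lemma exists_strictMono_refine (x : ℕ → ℂ) (r : ℝ) (hr : r ≠ 0) :
    ∀ (J : ℕ) (m : Fin (J+1) → ℕ), Monotone m →
    ∃ (L : ℕ) (k : Fin (L+1) → ℕ), StrictMono k ∧ (∀ i, ∃ j, k i = m j) ∧
      k (Fin.last L) = m (Fin.last J) ∧
      (∑ j : Fin J, ‖ x (m j.succ) - x (m j.castSucc)‖ ^ r)
        ≤ ∑ i : Fin L, ‖ x (k i.succ) - x (k i.castSucc)‖ ^ r := by
  intro J
  induction J with
  | zero =>
      intro m hm
      exact ⟨0, m, fun a b h => absurd (Fin.lt_iff_val_lt_val.mp h) (by omega), fun i => ⟨i, rfl⟩, rfl, by simp⟩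
  | succ J ih =>
      intro m hm
      obtain ⟨L, k, hk, hrange, hlast, hsum⟩ :=
        ih (m ∘ Fin.castSucc) (hm.comp (Fin.strictMono_castSucc.monotone))
      have hsum' : (∑ j : Fin J, ‖ x (m (Fin.castSucc j.succ))
            - x (m (Fin.castSucc j.castSucc))‖ ^ r)
          ≤ ∑ i : Fin L, ‖ x (k i.succ) - x (k i.castSucc)‖ ^ r := hsum
      have hexp : (∑ j : Fin (J+1), ‖ x (m j.succ) - x (m j.castSucc)‖ ^ r)
          = (∑ j : Fin J, ‖ x (m (Fin.castSucc j.succ))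
              - x (m (Fin.castSucc j.castSucc))‖ ^ r)
            + ‖ x (m (Fin.last (J+1))) - x (m ((Fin.last J).castSucc))‖ ^ r := by
        rw [Fin.sum_univ_castSucc, Fin.succ_last]
        congr 1
      rcases eq_or_lt_of_le (hm (Fin.le_last ((Fin.last J).castSucc))) with heq | hlt
      · refine ⟨L, k, hk, fun i => ?_, ?_, ?_⟩
        · obtain ⟨j, hj⟩ := hrange i; exact ⟨j.castSucc, hj⟩
        · rw [hlast]; exact heq
        · rw [hexp]
          have : ‖ x (m (Fin.last (J+1))) - x (m ((Fin.last J).castSucc))‖ ^ r = 0 := by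
            rw [← heq, sub_self, norm_zero, Real.zero_rpow hr]
          rw [this, add_zero]; exact hsum'
      · have hzlt : k (Fin.last L) < m (Fin.last (J+1)) := by rw [hlast]; exact hlt
        refine ⟨L+1, Fin.snoc k (m (Fin.last (J+1))), snoc_strictMono hk hzlt,
          fun i => ?_, by simp, ?_⟩
        · rcases Fin.eq_castSucc_or_eq_last i with ⟨i', rfl⟩ | rfl
          · obtain ⟨j, hj⟩ := hrange i'
            exact ⟨j.castSucc, by simpa using hj⟩
          · exact ⟨Fin.last (J+1), by simp⟩
        · rw [hexp, Fin.sum_univ_castSucc]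
          apply add_le_add
          · calc _ ≤ ∑ i : Fin L, ‖ x (k i.succ) - x (k i.castSucc)‖ ^ r := hsum'
              _ = _ := by
                apply Finset.sum_congr rfl
                intro i _
                rw [Fin.succ_castSucc, Fin.snoc_castSucc, Fin.snoc_castSucc]
          · rw [Fin.succ_last, Fin.snoc_last, Fin.snoc_castSucc, hlast]
            exact le_of_eq rfl

lemma key_variation (r : ℝ) (hr : 1 ≤ r) (x y : ℕ → ℂ) (J K : ℕ)
    (k : Fin (J+1) → ℕ)
    (μ : Fin (J+1) → ℕ → ℝ) (G : Fin (J+1) → ℕ → ℝ)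
    (hμ0 : ∀ j n, 0 ≤ μ j n)
    (hG0 : ∀ j, G j 0 = 0)
    (hGdiff : ∀ j n, G j (n+1) - G j n = μ j (n+1))
    (hGmono : ∀ j, Monotone (G j))
    (hGK : ∀ j, G j K = 1)
    (hGanti : ∀ (j j' : Fin (J+1)), j ≤ j' → ∀ m, G j' m ≤ G j m)
    (hrep : ∀ j, y (k j) = ∑ n ∈ Finset.Icc 1 K, (μ j n) • x n)
    (V : ℝ) (hV0 : 0 ≤ V)
    (hcol : ∀ (mm : Fin (J+1) → ℕ), Monotone mm → (∀ j, 1 ≤ mm j) →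
      (∑ j : Fin J, ‖ x (mm j.succ) - x (mm j.castSucc)‖ ^ r) ≤ V ^ r) :
    (∑ j : Fin J, ‖ y (k j.succ) - y (k j.castSucc)‖ ^ r) ≤ V ^ r := by
  classical
  -- quantile functions
  set Q : Fin (J+1) → ℝ → ℕ := fun j t => sInf {n | min t 1 ≤ G j n} with hQ
  have hne : ∀ j t, {n | min t 1 ≤ G j n}.Nonempty := by
    intro j t
    exact ⟨K, by simp only [Set.mem_setOf_eq, hGK]; exact min_le_right _ _⟩
  have hmem : ∀ j t, min t 1 ≤ G j (Q j t) := fun j t => Nat.sInf_mem (hne j t)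
  have hQK : ∀ j t, Q j t ≤ K := by
    intro j t
    exact Nat.sInf_le (by simp only [Set.mem_setOf_eq, hGK]; exact min_le_right _ _)
  have hQmono : ∀ j, Monotone (Q j) := by
    intro j t t' htt'
    apply Nat.sInf_le
    exact le_trans (min_le_min htt' le_rfl) (hmem j t')
  have hQj : ∀ (j j' : Fin (J+1)), j ≤ j' → ∀ t, Q j t ≤ Q j' t := by
    intro j j' hjj' t
    apply Nat.sInf_le
    exact le_trans (hmem j' t) (hGanti j j' hjj' _)
  have hQpos : ∀ j (t : ℝ), 0 < t → 1 ≤ Q j t := by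
    intro j t ht
    by_contra h
    have h0 : Q j t = 0 := by omega
    have h1 := hmem j t
    rw [h0, hG0] at h1
    have h2 : (0:ℝ) < min t 1 := lt_min ht one_pos
    linarith
  have hQeq : ∀ (j : Fin (J+1)) (M : ℕ), M + 1 ≤ K → ∀ t ∈ Set.Ioc (G j M) (G j (M+1)),
      Q j t = M + 1 := by
    intro j M hM t ht
    have hGM0 : 0 ≤ G j M := (hG0 j) ▸ hGmono j (Nat.zero_le M)
    have ht0 : 0 < t := lt_of_le_of_lt hGM0 ht.1
    have ht1 : t ≤ 1 := le_trans ht.2 ((hGK j) ▸ hGmono j hM)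
    have hmin : min t 1 = t := min_eq_left ht1
    apply le_antisymm
    · exact Nat.sInf_le (by simp only [Set.mem_setOf_eq, hmin]; exact ht.2)
    · by_contra h
      have h2 : Q j t ≤ M := by omega
      have := hmem j t
      rw [hmin] at this
      have : t ≤ G j M := le_trans this (hGmono j h2)
      exact absurd ht.1 (not_lt.mpr this)
  -- integrands
  set f : Fin (J+1) → ℝ → ℂ := fun j t => x (Q j t) with hf
  have hfm : ∀ j, Measurable (f j) :=
    fun j => measurable_from_top.comp ((hQmono j).measurable)
  set Cb : ℝ := ∑ n ∈ Finset.Icc 0 K, ‖ x n‖ with hCb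
  have hfb : ∀ j t, ‖f j t‖ ≤ Cb := by
    intro j t
    rw [hCb]
    apply Finset.single_le_sum (f := fun n => ‖ x n‖)
      (fun n _ => norm_nonneg _)
    simp only [Finset.mem_Icc]
    exact ⟨Nat.zero_le _, hQK j t⟩
  have hint : ∀ (j : Fin (J+1)) (a b : ℝ), IntegrableOn (f j) (Set.Ioc a b) := by
    intro j a b
    apply Integrable.mono' (g := fun _ => Cb)
      (integrableOn_const (C := Cb) measure_Ioc_lt_top.ne)
      ((hfm j).aestronglyMeasurable.restrict)
    exact ae_of_all _ fun t => hfb j t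
  -- integral identity
  have hkey : ∀ (j : Fin (J+1)) (M : ℕ), M ≤ K →
      (∫ t in Set.Ioc (0:ℝ) (G j M), f j t) = ∑ n ∈ Finset.Icc 1 M, (μ j n) • x n := by
    intro j M
    induction M with
    | zero =>
        intro _
        rw [hG0]
        simp
    | succ M ih =>
        intro hM
        have hM' : M ≤ K := by omega
        have hle : G j M ≤ G j (M+1) := hGmono j (Nat.le_succ M)
        have hGM0 : 0 ≤ G j M := (hG0 j) ▸ hGmono j (Nat.zero_le M)
        rw [← Set.Ioc_union_Ioc_eq_Ioc hGM0 hle,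
          setIntegral_union (Set.Ioc_disjoint_Ioc_of_le le_rfl) measurableSet_Ioc (hint j _ _) (hint j _ _),
          ih hM']
        have hconst : (∫ t in Set.Ioc (G j M) (G j (M+1)), f j t)
            = (μ j (M+1)) • x (M+1) := by
          have heq : Set.EqOn (f j) (fun _ => x (M+1)) (Set.Ioc (G j M) (G j (M+1))) := by
            intro t ht
            show x (Q j t) = x (M+1)
            rw [hQeq j M hM t ht]
          rw [setIntegral_congr_fun measurableSet_Ioc heq, setIntegral_const, Real.volume_real_Ioc,
            max_eq_left (by linarith), hGdiff]
        rw [hconst, Finset.sum_Icc_succ_top (by omega : 1 ≤ M + 1)]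
  have hprob : IsProbabilityMeasure (MeasureTheory.volume.restrict (Set.Ioc (0:ℝ) 1)) := by
    constructor
    simp [Real.volume_Ioc]
  have hyint : ∀ j, y (k j) = ∫ t in Set.Ioc (0:ℝ) 1, f j t := by
    intro j
    rw [hrep j, ← hkey j K le_rfl, hGK]
  have hrint2 : ∀ j : Fin J, Integrable (fun t => ‖f j.succ t - f j.castSucc t‖ ^ r)
      (MeasureTheory.volume.restrict (Set.Ioc (0:ℝ) 1)) := by
    intro j
    apply Integrable.mono' (g := fun _ => (2*Cb) ^ r)
      (integrableOn_const (C := (2*Cb)^r) measure_Ioc_lt_top.ne)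
    · exact ((Real.continuous_rpow_const (by linarith : (0:ℝ) ≤ r)).measurable.comp
        (((hfm j.succ).sub (hfm j.castSucc)).norm)).aestronglyMeasurable.restrict
    · apply ae_of_all
      intro t
      rw [Real.norm_rpow_of_nonneg (norm_nonneg _), norm_norm]
      apply Real.rpow_le_rpow (norm_nonneg _) _ (by linarith)
      calc ‖f j.succ t - f j.castSucc t‖ ≤ ‖f j.succ t‖ + ‖f j.castSucc t‖ := norm_sub_le _ _
        _ ≤ Cb + Cb := add_le_add (hfb _ _) (hfb _ _)
        _ = 2 * Cb := by ring
  -- pointwise difference bound via Jensen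
  have hstep : ∀ j : Fin J, ‖ y (k j.succ) - y (k j.castSucc)‖ ^ r
      ≤ ∫ t in Set.Ioc (0:ℝ) 1,
          ‖ x (Q j.succ t) - x (Q j.castSucc t)‖ ^ r := by
    intro j
    have h1 : y (k j.succ) - y (k j.castSucc)
        = ∫ t in Set.Ioc (0:ℝ) 1, (f j.succ t - f j.castSucc t) := by
      rw [hyint, hyint, integral_sub ((hint j.succ 0 1)) ((hint j.castSucc 0 1))]
    have h2 : ‖ y (k j.succ) - y (k j.castSucc)‖
        ≤ ∫ t in Set.Ioc (0:ℝ) 1, ‖f j.succ t - f j.castSucc t‖ := by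
      rw [h1]
      exact norm_integral_le_integral_norm _
    -- Jensen
    have hgint : Integrable (fun t => ‖f j.succ t - f j.castSucc t‖)
        (MeasureTheory.volume.restrict (Set.Ioc (0:ℝ) 1)) :=
      ((hint j.succ 0 1).sub (hint j.castSucc 0 1)).norm
    have hrint : Integrable (fun t => ‖f j.succ t - f j.castSucc t‖ ^ r)
        (MeasureTheory.volume.restrict (Set.Ioc (0:ℝ) 1)) := hrint2 j
    have hjensen : (∫ t in Set.Ioc (0:ℝ) 1, ‖f j.succ t - f j.castSucc t‖) ^ r
        ≤ ∫ t in Set.Ioc (0:ℝ) 1, ‖f j.succ t - f j.castSucc t‖ ^ r := by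
      have := (convexOn_rpow hr).map_integral_le (μ := MeasureTheory.volume.restrict (Set.Ioc (0:ℝ) 1))
        (f := fun t => ‖f j.succ t - f j.castSucc t‖)
        ((Real.continuous_rpow_const (by linarith)).continuousOn)
        isClosed_Ici (ae_of_all _ fun t => norm_nonneg _) hgint ?_
      · exact this
      · exact hrint
    have hnn : 0 ≤ ∫ t in Set.Ioc (0:ℝ) 1, ‖f j.succ t - f j.castSucc t‖ :=
      integral_nonneg (fun t => norm_nonneg _)
    calc ‖ y (k j.succ) - y (k j.castSucc)‖ ^ r
        ≤ (∫ t in Set.Ioc (0:ℝ) 1, ‖f j.succ t - f j.castSucc t‖) ^ r :=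
          Real.rpow_le_rpow (norm_nonneg _) h2 (by linarith)
      _ ≤ _ := hjensen
  -- sum up
  have hsum : (∑ j : Fin J, ‖ y (k j.succ) - y (k j.castSucc)‖ ^ r)
      ≤ ∫ t in Set.Ioc (0:ℝ) 1,
          (∑ j : Fin J, ‖ x (Q j.succ t) - x (Q j.castSucc t)‖ ^ r) := by
    rw [integral_finset_sum]
    · exact Finset.sum_le_sum fun j _ => hstep j
    · intro j _
      exact hrint2 j
  have hptwise : ∀ t ∈ Set.Ioc (0:ℝ) 1,
      (∑ j : Fin J, ‖ x (Q j.succ t) - x (Q j.castSucc t)‖ ^ r) ≤ V ^ r := by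
    intro t ht
    apply hcol (fun j => Q j t)
    · intro a b hab
      exact hQj a b hab t
    · intro j
      exact hQpos j t ht.1
  have hfinal : (∫ t in Set.Ioc (0:ℝ) 1,
      (∑ j : Fin J, ‖ x (Q j.succ t) - x (Q j.castSucc t)‖ ^ r)) ≤ V ^ r := by
    have := setIntegral_mono_on (μ := MeasureTheory.volume) (s := Set.Ioc (0:ℝ) 1)
      (f := fun t => ∑ j : Fin J, ‖ x (Q j.succ t) - x (Q j.castSucc t)‖ ^ r)
      (g := fun _ => V ^ r) ?_ ?_ measurableSet_Ioc hptwise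
    · calc _ ≤ ∫ t in Set.Ioc (0:ℝ) 1, V ^ r := this
        _ = V ^ r := by
          rw [setIntegral_const, Real.volume_real_Ioc, max_eq_left (by norm_num)]
          norm_num
    · apply integrable_finset_sum
      intro j _
      exact hrint2 j
    · exact integrableOn_const (C := V^r) measure_Ioc_lt_top.ne
  exact le_trans hsum hfinal

lemma witness_bound (r : ℝ) (hr : 1 ≤ r) (c : ℕ → ℂ) (w v : ℕ → ℝ)
    (hw : ∀ n, 0 < w n) (hv : ∀ n, 0 < v n)
    (hmono : ∀ m n, m ≤ n → w n / v n ≤ w m / v m)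
    (J : ℕ) (k : Fin (J+1) → ℕ) (hk : StrictMono k) (hk1 : ∀ j, 1 ≤ k j)
    (V : ℝ) (hV0 : 0 ≤ V)
    (hcol : ∀ (mm : Fin (J+1) → ℕ), Monotone mm → (∀ j, 1 ≤ mm j) →
      (∑ j : Fin J, ‖
        (∑ n ∈ Finset.Icc 1 (mm j.succ), c n * (v n : ℂ)) /
            ((∑ n ∈ Finset.Icc 1 (mm j.succ), v n : ℝ) : ℂ)
          - (∑ n ∈ Finset.Icc 1 (mm j.castSucc), c n * (v n : ℂ)) /
            ((∑ n ∈ Finset.Icc 1 (mm j.castSucc), v n : ℝ) : ℂ)‖ ^ r) ≤ V ^ r) :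
    (∑ j : Fin J, ‖
        (∑ n ∈ Finset.Icc 1 (k j.succ), c n * (w n : ℂ)) /
            ((∑ n ∈ Finset.Icc 1 (k j.succ), w n : ℝ) : ℂ)
          - (∑ n ∈ Finset.Icc 1 (k j.castSucc), c n * (w n : ℂ)) /
            ((∑ n ∈ Finset.Icc 1 (k j.castSucc), w n : ℝ) : ℂ)‖ ^ r) ≤ V ^ r := by
  classical
  set lam : ℕ → ℝ := fun n => w n / v n with hlam
  set Bf : ℕ → ℝ := fun N => ∑ n ∈ Finset.Icc 1 N, v n with hBf
  set Af : ℕ → ℝ := fun N => ∑ n ∈ Finset.Icc 1 N, w n with hAf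
  set b : ℕ → ℂ := fun N => ∑ n ∈ Finset.Icc 1 N, c n * (v n : ℂ) with hb
  set a : ℕ → ℂ := fun N => ∑ n ∈ Finset.Icc 1 N, c n * (w n : ℂ) with ha
  set x : ℕ → ℂ := fun N => b N / ((Bf N : ℝ) : ℂ) with hx
  set y : ℕ → ℂ := fun N => a N / ((Af N : ℝ) : ℂ) with hy
  -- basic positivity
  have hBpos : ∀ N, 1 ≤ N → 0 < Bf N := by
    intro N hN
    apply Finset.sum_pos (fun n _ => hv n)
    exact ⟨1, Finset.mem_Icc.mpr ⟨le_rfl, hN⟩⟩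
  have hApos : ∀ N, 1 ≤ N → 0 < Af N := by
    intro N hN
    apply Finset.sum_pos (fun n _ => hw n)
    exact ⟨1, Finset.mem_Icc.mpr ⟨le_rfl, hN⟩⟩
  have hAmono : Monotone Af := by
    intro N N' hNN'
    apply Finset.sum_le_sum_of_subset_of_nonneg
      (Finset.Icc_subset_Icc_right hNN') (fun n _ _ => (hw n).le)
  have hwlam : ∀ n, lam n * v n = w n := fun n => div_mul_cancel₀ (w n) (hv n).ne'
  have hlam_anti : ∀ m n : ℕ, m ≤ n → lam n ≤ lam m := fun m n h => hmono m n h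
  have hlam_pos : ∀ n, 0 < lam n := fun n => div_pos (hw n) (hv n)
  set K := k (Fin.last J) with hK
  have hkK : ∀ j, k j ≤ K := fun j => hk.monotone (Fin.le_last j)
  -- the weights
  set μ : Fin (J+1) → ℕ → ℝ := fun j n =>
    if n < k j then (lam n - lam (n+1)) * Bf n / Af (k j)
    else if n = k j then lam n * Bf n / Af (k j) else 0 with hμ
  set G : Fin (J+1) → ℕ → ℝ := fun j m => ∑ n ∈ Finset.Icc 1 m, μ j n with hG
  have hμlt : ∀ j n, n < k j → μ j n = (lam n - lam (n+1)) * Bf n / Af (k j) := by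
    intro j n h; simp only [hμ, if_pos h]
  have hμeq : ∀ j, μ j (k j) = lam (k j) * Bf (k j) / Af (k j) := by
    intro j; simp [hμ]
  have hμgt : ∀ j n, k j < n → μ j n = 0 := by
    intro j n h
    simp only [hμ, if_neg (by omega : ¬ n < k j), if_neg (by omega : ¬ n = k j)]
  have hμ0 : ∀ j n, 0 ≤ μ j n := by
    intro j n
    by_cases h1 : n < k j
    · rw [hμlt j n h1]
      apply div_nonneg (mul_nonneg (by linarith [hlam_anti n (n+1) (Nat.le_succ n)])
        (Finset.sum_nonneg (fun i _ => (hv i).le))) (hApos _ (hk1 j)).le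
    · by_cases h2 : n = k j
      · subst h2
        rw [hμeq j]
        apply div_nonneg (mul_nonneg (hlam_pos _).le
          (Finset.sum_nonneg (fun i _ => (hv i).le))) (hApos _ (hk1 j)).le
      · rw [hμgt j n (by omega)]
  -- Abel identity for Af (real version)
  have habelA : ∀ M : ℕ, Af (M+1)
      = ∑ n ∈ Finset.Icc 1 M, (lam n - lam (n+1)) * Bf n + lam (M+1) * Bf (M+1) := by
    intro M
    have := abel_sum (R := ℝ) lam v M
    rw [hAf]
    simp only
    rw [← this]
    apply Finset.sum_congr rfl
    intro n _
    rw [hwlam n]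
  -- sum of μ equals 1
  have hGfull : ∀ j m, k j ≤ m → G j m = 1 := by
    intro j m hm
    have hsub : ∑ n ∈ Finset.Icc 1 m, μ j n = ∑ n ∈ Finset.Icc 1 (k j), μ j n := by
      symm
      apply Finset.sum_subset (Finset.Icc_subset_Icc_right hm)
      intro n hn hn'
      apply hμgt
      simp only [Finset.mem_Icc] at hn hn'
      omega
    rw [hG]
    simp only
    rw [hsub]
    obtain ⟨M, hM⟩ : ∃ M, k j = M + 1 := ⟨k j - 1, by have := hk1 j; omega⟩
    rw [hM, Finset.sum_Icc_succ_top (by omega : 1 ≤ M + 1)]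
    have h1 : ∀ n ∈ Finset.Icc 1 M, μ j n = (lam n - lam (n+1)) * Bf n / Af (k j) := by
      intro n hn
      simp only [Finset.mem_Icc] at hn
      exact hμlt j n (by omega)
    have hμtop := hμeq j
    rw [hM] at hμtop
    rw [Finset.sum_congr rfl h1, hμtop, hM]
    rw [← Finset.sum_div, ← add_div, ← habelA M]
    exact div_self (hApos _ (by omega)).ne'
  have hG0 : ∀ j, G j 0 = 0 := by intro j; simp [hG]
  have hGdiff : ∀ j n, G j (n+1) - G j n = μ j (n+1) := by
    intro j n
    rw [hG]
    simp only
    rw [Finset.sum_Icc_succ_top (by omega : 1 ≤ n + 1)]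
    ring
  have hGmono : ∀ j, Monotone (G j) := by
    intro j m m' hmm'
    apply Finset.sum_le_sum_of_subset_of_nonneg
      (Finset.Icc_subset_Icc_right hmm') (fun n _ _ => hμ0 j n)
  have hGanti : ∀ (j j' : Fin (J+1)), j ≤ j' → ∀ m, G j' m ≤ G j m := by
    intro j j' hjj' m
    have hkk : k j ≤ k j' := hk.monotone hjj'
    by_cases hm : m < k j
    · have hm' : m < k j' := by omega
      have hGj : G j m = (∑ n ∈ Finset.Icc 1 m, (lam n - lam (n+1)) * Bf n) / Af (k j) := by
        rw [hG]; simp only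
        rw [Finset.sum_div]
        apply Finset.sum_congr rfl
        intro n hn
        simp only [Finset.mem_Icc] at hn
        exact hμlt j n (by omega)
      have hGj' : G j' m = (∑ n ∈ Finset.Icc 1 m, (lam n - lam (n+1)) * Bf n) / Af (k j') := by
        rw [hG]; simp only
        rw [Finset.sum_div]
        apply Finset.sum_congr rfl
        intro n hn
        simp only [Finset.mem_Icc] at hn
        exact hμlt j' n (by omega)
      rw [hGj, hGj']
      apply div_le_div_of_nonneg_left _ (hApos _ (hk1 j)) (hAmono hkk)
      apply Finset.sum_nonneg
      intro n hn
      apply mul_nonneg (by linarith [hlam_anti n (n+1) (Nat.le_succ n)])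
        (Finset.sum_nonneg (fun i _ => (hv i).le))
    · push_neg at hm
      rw [hGfull j m hm]
      calc G j' m ≤ G j' (max m (k j')) := hGmono j' (le_max_left _ _)
        _ = 1 := hGfull j' _ (le_max_right _ _)
  -- representation of y
  have hrep : ∀ j, y (k j) = ∑ n ∈ Finset.Icc 1 K, (μ j n) • x n := by
    intro j
    have hsub : ∑ n ∈ Finset.Icc 1 K, (μ j n) • x n
        = ∑ n ∈ Finset.Icc 1 (k j), (μ j n) • x n := by
      symm
      apply Finset.sum_subset (Finset.Icc_subset_Icc_right (hkK j))
      intro n hn hn'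
      simp only [Finset.mem_Icc] at hn hn'
      rw [hμgt j n (by omega), zero_smul]
    rw [hsub]
    obtain ⟨M, hM⟩ : ∃ M, k j = M + 1 := ⟨k j - 1, by have := hk1 j; omega⟩
    have hAne : ((Af (k j) : ℝ) : ℂ) ≠ 0 := by
      simp only [Complex.ofReal_ne_zero]
      exact (hApos _ (hk1 j)).ne'
    have hterm : ∀ n, 1 ≤ n → n ≤ M →
        (μ j n) • x n = ((lam n : ℂ) - (lam (n+1) : ℂ)) * b n / ((Af (k j) : ℝ) : ℂ) := by
      intro n h1 h2
      have hBne : ((Bf n : ℝ) : ℂ) ≠ 0 := by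
        simp only [Complex.ofReal_ne_zero]
        exact (hBpos n h1).ne'
      rw [hμlt j n (by omega), hx]
      simp only
      rw [Complex.real_smul]
      push_cast
      field_simp
    have htop : (μ j (k j)) • x (k j) = (lam (k j) : ℂ) * b (k j) / ((Af (k j) : ℝ) : ℂ) := by
      have hBne : ((Bf (k j) : ℝ) : ℂ) ≠ 0 := by
        simp only [Complex.ofReal_ne_zero]
        exact (hBpos _ (hk1 j)).ne'
      rw [hμeq j, hx]
      simp only
      rw [Complex.real_smul]
      push_cast
      field_simp
    rw [hM, Finset.sum_Icc_succ_top (by omega : 1 ≤ M + 1)]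
    rw [Finset.sum_congr rfl (fun n hn => hterm n (Finset.mem_Icc.mp hn).1 (Finset.mem_Icc.mp hn).2)]
    rw [hM] at htop
    rw [htop, hM]
    rw [← Finset.sum_div, ← add_div]
    have habelC : a (M+1) = ∑ n ∈ Finset.Icc 1 M, ((lam n : ℂ) - (lam (n+1) : ℂ)) * b n
        + (lam (M+1) : ℂ) * b (M+1) := by
      have := abel_sum (R := ℂ) (fun n => (lam n : ℂ)) (fun n => c n * (v n : ℂ)) M
      rw [ha]
      simp only
      rw [← this]
      apply Finset.sum_congr rfl
      intro n _
      have : ((w n : ℝ) : ℂ) = ((lam n : ℝ) : ℂ) * ((v n : ℝ) : ℂ) := by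
        rw [← hwlam n]; push_cast; ring
      rw [this]; ring
    rw [hy]
    simp only
    rw [habelC]
  -- apply the key lemma
  have hcol' : ∀ (mm : Fin (J+1) → ℕ), Monotone mm → (∀ j, 1 ≤ mm j) →
      (∑ j : Fin J, ‖ x (mm j.succ) - x (mm j.castSucc)‖ ^ r) ≤ V ^ r := hcol
  exact key_variation r hr x y J K k μ G hμ0 hG0 hGdiff hGmono
    (fun j => hGfull j K (hkK j)) hGanti hrep V hV0 hcol'

/-- Weight-comparison principle for `r`-variations of weighted averages:
if `w_n/v_n` is decreasing then `V_r(a_N / A_N) ≤ C · V_r(b_N / B_N)` with an absolute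
constant `C`, where `a_N = Σ_{n≤N} c_n w_n`, `A_N = Σ_{n≤N} w_n`, etc. -/
theorem rVar_weighted_average_comparison :
    ∃ C : ℝ, 0 < C ∧ ∀ (r : ℝ), 2 < r → ∀ (c : ℕ → ℂ) (w v : ℕ → ℝ),
      (∀ n, 0 < w n) → (∀ n, 0 < v n) →
      (∀ m n, m ≤ n → w n / v n ≤ w m / v m) →
      rVar r
          (fun N => (∑ n ∈ Finset.Icc 1 N, c n * (w n : ℂ)) /
            ((∑ n ∈ Finset.Icc 1 N, w n : ℝ) : ℂ))
          {N : ℕ | 1 ≤ N} ≤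
        ENNReal.ofReal C *
          rVar r
            (fun N => (∑ n ∈ Finset.Icc 1 N, c n * (v n : ℂ)) /
              ((∑ n ∈ Finset.Icc 1 N, v n : ℝ) : ℂ))
            {N : ℕ | 1 ≤ N} := by
  refine ⟨1, one_pos, ?_⟩
  intro r hr c w v hw hv hmono
  have hr1 : 1 ≤ r := by linarith
  have hr0 : r ≠ 0 := by positivity
  have hrpos : (0:ℝ) < r := by linarith
  set x : ℕ → ℂ := fun N => (∑ n ∈ Finset.Icc 1 N, c n * (v n : ℂ)) /
      ((∑ n ∈ Finset.Icc 1 N, v n : ℝ) : ℂ) with hx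
  set y : ℕ → ℂ := fun N => (∑ n ∈ Finset.Icc 1 N, c n * (w n : ℂ)) /
      ((∑ n ∈ Finset.Icc 1 N, w n : ℝ) : ℂ) with hy
  rw [ENNReal.ofReal_one, one_mul]
  by_cases htop : rVar r x {N : ℕ | 1 ≤ N} = ⊤
  · rw [htop]; exact le_top
  · set V : ℝ := (rVar r x {N : ℕ | 1 ≤ N}).toReal with hV
    have hV0 : 0 ≤ V := ENNReal.toReal_nonneg
    have hVeq : rVar r x {N : ℕ | 1 ≤ N} = ENNReal.ofReal V :=
      (ENNReal.ofReal_toReal htop).symm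
    have hstrict : ∀ (L : ℕ) (kk : Fin (L+1) → ℕ), StrictMono kk → (∀ i, 1 ≤ kk i) →
        (∑ i : Fin L, ‖ x (kk i.succ) - x (kk i.castSucc)‖ ^ r) ≤ V ^ r := by
      intro L kk hkk hkk1
      set s : ℝ := ∑ i : Fin L, ‖ x (kk i.succ) - x (kk i.castSucc)‖ ^ r with hs
      have hs0 : 0 ≤ s :=
        Finset.sum_nonneg fun i _ => Real.rpow_nonneg (norm_nonneg _) r
      have hle : ENNReal.ofReal (s ^ (1/r)) ≤ rVar r x {N : ℕ | 1 ≤ N} := by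
        rw [rVar]
        exact le_iSup_of_le L (le_iSup_of_le kk (le_iSup_of_le hkk
          (le_iSup_of_le (fun i => hkk1 i) le_rfl)))
      rw [hVeq, ENNReal.ofReal_le_ofReal_iff hV0] at hle
      calc s = (s ^ (1/r)) ^ r := by
            rw [← Real.rpow_mul hs0, one_div, inv_mul_cancel₀ hr0, Real.rpow_one]
        _ ≤ V ^ r := Real.rpow_le_rpow (Real.rpow_nonneg hs0 _) hle hrpos.le
    have hcol : ∀ (L : ℕ) (mm : Fin (L+1) → ℕ), Monotone mm → (∀ i, 1 ≤ mm i) →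
        (∑ i : Fin L, ‖ x (mm i.succ) - x (mm i.castSucc)‖ ^ r) ≤ V ^ r := by
      intro L mm hmm hmm1
      obtain ⟨L', kk, hkk, hrange, _, hsumle⟩ := exists_strictMono_refine x r hr0 L mm hmm
      refine le_trans hsumle (hstrict L' kk hkk fun i => ?_)
      obtain ⟨j, hj⟩ := hrange i
      rw [hj]; exact hmm1 j
    rw [hVeq, rVar]
    apply iSup_le; intro J
    apply iSup_le; intro k
    apply iSup_le; intro hk
    apply iSup_le; intro hk1
    apply ENNReal.ofReal_le_ofReal
    have hb := witness_bound r hr1 c w v hw hv hmono J k hk (fun j => hk1 j) V hV0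
      (fun mm hmm hmm1 => hcol J mm hmm hmm1)
    have hsumnn : (0:ℝ) ≤ ∑ j : Fin J, ‖ y (k j.succ) - y (k j.castSucc)‖ ^ r :=
      Finset.sum_nonneg fun i _ => Real.rpow_nonneg (norm_nonneg _) r
    calc (∑ j : Fin J, ‖ y (k j.succ) - y (k j.castSucc)‖ ^ r) ^ (1/r)
        ≤ (V ^ r) ^ (1/r) := Real.rpow_le_rpow hsumnn hb (by positivity)
      _ = V := by rw [← Real.rpow_mul hV0, mul_one_div, div_self hr0, Real.rpow_one]
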